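/- The function Σ_{i≥0} ((6i)!/((3i)!(2i)!(2i+1)!!))·((6i+1)/(6i−1))·(t²/216)^i equals −(3/(4t))·sin((4/3)·arcsin(t)) as a power series identity in t. -/

import Mathlib

open Nat

noncomputable def sineD (i : ℕ) : ℝ :=
  (-(4:ℝ)/3) * (((6*i).factorial : ℝ) /
      (((3*i).factorial : ℝ) * ((2*i).factorial : ℝ) * ((2*i+1)‼ : ℝ)) *
    ((6*(i:ℝ)+1)/(6*(i:ℝ)-1))) / 216 ^ i

lemma sineD_zero : sineD 0 = 4/3 := by
  simp [sineD, Nat.doubleFactorial]; norm_num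

lemma six_cast_ne (i : ℕ) : (6*(i:ℝ)-1) ≠ 0 := by
  rcases i with _ | j
  · norm_num
  · push_cast; nlinarith [Nat.cast_nonneg (α := ℝ) j]

lemma sineD_rec (i : ℕ) : sineD (i+1) * ((2*(i:ℝ)+2)*(2*(i:ℝ)+3)) =
    sineD i * ((2*(i:ℝ)+1)^2 - 16/9) := by
  have h6 : ((6*(i+1)).factorial : ℝ) = ((6*i).factorial : ℝ) *
      ((6*(i:ℝ)+1)*(6*(i:ℝ)+2)*(6*(i:ℝ)+3)*(6*(i:ℝ)+4)*(6*(i:ℝ)+5)*(6*(i:ℝ)+6)) := by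
    have : 6*(i+1) = (6*i+1)+1+1+1+1+1 := by ring
    rw [this]
    simp only [Nat.factorial_succ]
    push_cast; ring
  have h3 : ((3*(i+1)).factorial : ℝ) = ((3*i).factorial : ℝ) *
      ((3*(i:ℝ)+1)*(3*(i:ℝ)+2)*(3*(i:ℝ)+3)) := by
    have : 3*(i+1) = (3*i+1)+1+1 := by ring
    rw [this]; simp only [Nat.factorial_succ]; push_cast; ring
  have h2 : ((2*(i+1)).factorial : ℝ) = ((2*i).factorial : ℝ) *
      ((2*(i:ℝ)+1)*(2*(i:ℝ)+2)) := by
    have : 2*(i+1) = (2*i+1)+1 := by ring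
    rw [this]; simp only [Nat.factorial_succ]; push_cast; ring
  have hd : ((2*(i+1)+1)‼ : ℝ) = ((2*i+1)‼ : ℝ) * (2*(i:ℝ)+3) := by
    have : 2*(i+1)+1 = (2*i+1)+2 := by ring
    rw [this, Nat.doubleFactorial_add_two]; push_cast; ring
  have hne1 : ((6*i).factorial : ℝ) ≠ 0 := by positivity
  have hne3 : ((3*i).factorial : ℝ) ≠ 0 := by positivity
  have hne2 : ((2*i).factorial : ℝ) ≠ 0 := by positivity
  have hned : ((2*i+1)‼ : ℝ) ≠ 0 :=
    Nat.cast_ne_zero.mpr (Nat.doubleFactorial_pos _).ne'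
  have hs1 : (6*(i:ℝ)-1) ≠ 0 := six_cast_ne i
  have hs2 : (6*((i:ℝ)+1)-1) ≠ 0 := by
    have := six_cast_ne (i+1); push_cast at this ⊢; intro h; exact this (by linarith)
  have h216 : ((216:ℝ))^i ≠ 0 := by positivity
  unfold sineD
  rw [h6, h3, h2, hd]
  push_cast
  field_simp
  ring



lemma sineD_rec' (i : ℕ) : sineD (i+1) =
    sineD i * ((2*(i:ℝ)+1)^2 - 16/9) / ((2*(i:ℝ)+2)*(2*(i:ℝ)+3)) := by
  have h : ((2*(i:ℝ)+2)*(2*(i:ℝ)+3)) ≠ 0 := by positivity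
  rw [eq_div_iff h]
  exact sineD_rec i

lemma sineD_bound (i : ℕ) : |sineD i| ≤ 4/3 := by
  induction i with
  | zero => rw [sineD_zero, abs_of_pos] <;> norm_num
  | succ j ih =>
    rw [sineD_rec']
    rw [abs_div, abs_mul]
    have hn : (0:ℝ) ≤ (j:ℝ) := Nat.cast_nonneg j
    have hden : |(2*(j:ℝ)+2)*(2*(j:ℝ)+3)| = (2*(j:ℝ)+2)*(2*(j:ℝ)+3) := by
      rw [abs_of_pos]; positivity
    rw [hden]
    have hnum : |(2*(j:ℝ)+1)^2 - 16/9| ≤ (2*(j:ℝ)+2)*(2*(j:ℝ)+3) := by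
      rw [abs_le]; constructor <;> nlinarith
    have hpos : (0:ℝ) < (2*(j:ℝ)+2)*(2*(j:ℝ)+3) := by positivity
    rw [div_le_iff₀ hpos]
    calc |sineD j| * |(2*(j:ℝ)+1)^2 - 16/9| ≤ (4/3) * ((2*(j:ℝ)+2)*(2*(j:ℝ)+3)) := by
          apply mul_le_mul ih hnum (abs_nonneg _) (by norm_num)
      _ = _ := rfl

noncomputable def sineS (x : ℝ) : ℝ := ∑' i : ℕ, sineD i * x ^ (2*i+1)
noncomputable def sineS1 (x : ℝ) : ℝ := ∑' i : ℕ, sineD i * (((2*i+1 : ℕ)) * x ^ (2*i))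
noncomputable def sineS2 (x : ℝ) : ℝ :=
  ∑' i : ℕ, sineD i * (((2*i+1 : ℕ)) * (((2*i : ℕ)) * x ^ (2*i-1)))

lemma summable_master {x : ℝ} (hx : |x| < 1) :
    Summable (fun i : ℕ => ((i:ℝ)+1)^2 * x ^ i) := by
  have hx' : ‖x‖ < 1 := by rwa [Real.norm_eq_abs]
  have h2 := summable_pow_mul_geometric_of_norm_lt_one (R := ℝ) 2 hx'
  have h1 := summable_pow_mul_geometric_of_norm_lt_one (R := ℝ) 1 hx'
  have h0 := summable_geometric_of_norm_lt_one hx'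
  have := (h2.add ((h1.mul_left 2).add h0))
  apply this.congr
  intro i; push_cast; ring

lemma bound_S {r x : ℝ} (hrpos : 0 ≤ r) (hr1 : r ≤ 1) (hx : |x| ≤ r) (i : ℕ) :
    ‖sineD i * x ^ (2*i+1)‖ ≤ 11 * (((i:ℝ)+1)^2 * (r^2) ^ i) := by
  rw [Real.norm_eq_abs, abs_mul, abs_pow]
  have hax : (0:ℝ) ≤ |x| := abs_nonneg x
  have hp : |x| ^ (2*i+1) ≤ r ^ (2*i+1) := pow_le_pow_left₀ hax hx _
  have hr2 : r ^ (2*i+1) = r * (r^2)^i := by rw [← pow_mul]; ring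
  have h1 : (1:ℝ) ≤ ((i:ℝ)+1)^2 := by nlinarith [Nat.cast_nonneg (α := ℝ) i]
  have hrp : (0:ℝ) ≤ (r^2)^i := by positivity
  calc |sineD i| * |x| ^ (2*i+1) ≤ (4/3) * (r * (r^2)^i) := by
        rw [← hr2]; exact mul_le_mul (sineD_bound i) hp (by positivity) (by norm_num)
    _ ≤ 11 * (((i:ℝ)+1)^2 * (r^2)^i) := by nlinarith [mul_le_mul_of_nonneg_right hr1 hrp, mul_le_mul_of_nonneg_right h1 hrp]






lemma bound_S1 {r x : ℝ} (hrpos : 0 ≤ r) (hx : |x| ≤ r) (i : ℕ) :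
    ‖sineD i * (((2*i+1 : ℕ):ℝ) * x ^ (2*i))‖ ≤ 11 * (((i:ℝ)+1)^2 * (r^2) ^ i) := by
  rw [Real.norm_eq_abs, abs_mul, abs_mul, abs_pow]
  have hax : (0:ℝ) ≤ |x| := abs_nonneg x
  have hp : |x| ^ (2*i) ≤ (r^2) ^ i := by
    rw [pow_mul]
    exact pow_le_pow_left₀ (by positivity : (0:ℝ) ≤ |x|^2) (by nlinarith) i
  have hc : |((2*i+1 : ℕ):ℝ)| = 2*(i:ℝ)+1 := by
    rw [abs_of_nonneg (by positivity)]; push_cast; ring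
  rw [hc]
  have h1 : (2*(i:ℝ)+1) ≤ 2*((i:ℝ)+1)^2 := by nlinarith [Nat.cast_nonneg (α := ℝ) i]
  have hrp : (0:ℝ) ≤ (r^2)^i := by positivity
  have hd := sineD_bound i
  have ha : (0:ℝ) ≤ |sineD i| := abs_nonneg _
  have hxp : (0:ℝ) ≤ |x| ^ (2*i) := by positivity
  nlinarith [mul_le_mul hd (mul_le_mul h1 hp hxp (by positivity)) (by positivity) (by norm_num),
    mul_le_mul_of_nonneg_right h1 hrp]

lemma bound_S2 {r x : ℝ} (hr0 : (1:ℝ)/2 ≤ r) (hx : |x| ≤ r) (i : ℕ) :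
    ‖sineD i * (((2*i+1 : ℕ):ℝ) * (((2*i : ℕ):ℝ) * x ^ (2*i-1)))‖ ≤
      11 * (((i:ℝ)+1)^2 * (r^2) ^ i) := by
  have hrpos : (0:ℝ) ≤ r := by linarith
  rcases i with _ | j
  · simp
  · set i := j + 1 with hi
    have h2i : 2*i-1 = 2*j+1 := by omega
    rw [Real.norm_eq_abs, abs_mul, abs_mul, abs_mul, abs_pow, h2i]
    have hax : (0:ℝ) ≤ |x| := abs_nonneg x
    have hp : |x| ^ (2*j+1) ≤ r ^ (2*j+1) := pow_le_pow_left₀ hax hx _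
    have hr2 : r ^ (2*j+1) ≤ 2 * (r^2) ^ i := by
      have : (r^2) ^ i = r ^ (2*j+1) * r := by rw [← pow_mul]; ring
      nlinarith [pow_nonneg hrpos (2*j+1)]
    have hc1 : |((2*i+1 : ℕ):ℝ)| = 2*(i:ℝ)+1 := by
      rw [abs_of_nonneg (by positivity)]; push_cast; ring
    have hc2 : |((2*i : ℕ):ℝ)| = 2*(i:ℝ) := by
      rw [abs_of_nonneg (by positivity)]; push_cast; ring
    rw [hc1, hc2]
    have hprod : (2*(i:ℝ)+1) * (2*(i:ℝ)) ≤ 4*((i:ℝ)+1)^2 := by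
      nlinarith [Nat.cast_nonneg (α := ℝ) i]
    have hd := sineD_bound i
    have hxp : |x| ^ (2*j+1) ≤ 2 * (r^2) ^ i := le_trans hp hr2
    have h0 : (0:ℝ) ≤ (r^2)^i := by positivity
    have key : (2*(i:ℝ)+1) * ((2*(i:ℝ)) * |x| ^ (2*j+1)) ≤ 8*((i:ℝ)+1)^2 * (r^2)^i := by
      nlinarith [mul_le_mul hprod hxp (by positivity) (by positivity),
        Nat.cast_nonneg (α := ℝ) i]
    nlinarith [mul_le_mul hd key (by positivity) (by norm_num),
      mul_le_mul_of_nonneg_right (sq_nonneg ((i:ℝ)+1)) h0]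

lemma r_facts {t : ℝ} (ht : |t| < 1) :
    |t| < (1+|t|)/2 ∧ (1:ℝ)/2 ≤ (1+|t|)/2 ∧ (1+|t|)/2 < 1 ∧ |(( (1+|t|)/2 : ℝ))^2| < 1 := by
  have h0 : (0:ℝ) ≤ |t| := abs_nonneg t
  refine ⟨by linarith, by linarith, by linarith, ?_⟩
  rw [abs_of_nonneg (by positivity)]
  nlinarith

lemma sineS_summable {t : ℝ} (ht : |t| < 1) : Summable (fun i : ℕ => sineD i * t ^ (2*i+1)) := by
  obtain ⟨h1, h2, h3, h4⟩ := r_facts ht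
  exact Summable.of_norm_bounded ((summable_master h4).mul_left 11)
    (fun i => bound_S (by linarith) h3.le h1.le i)

lemma sineS_hasSum {t : ℝ} (ht : |t| < 1) :
    HasSum (fun i : ℕ => sineD i * t ^ (2*i+1)) (sineS t) := (sineS_summable ht).hasSum

lemma sineS1_hasSum {t : ℝ} (ht : |t| < 1) :
    HasSum (fun i : ℕ => sineD i * (((2*i+1 : ℕ):ℝ) * t ^ (2*i))) (sineS1 t) := by
  obtain ⟨h1, h2, h3, h4⟩ := r_facts ht
  exact (Summable.of_norm_bounded ((summable_master h4).mul_left 11)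
    (fun i => bound_S1 (by linarith) h1.le i)).hasSum

lemma sineS2_hasSum {t : ℝ} (ht : |t| < 1) :
    HasSum (fun i : ℕ => sineD i * (((2*i+1 : ℕ):ℝ) * (((2*i : ℕ):ℝ) * t ^ (2*i-1))))
      (sineS2 t) := by
  obtain ⟨h1, h2, h3, h4⟩ := r_facts ht
  exact (Summable.of_norm_bounded ((summable_master h4).mul_left 11)
    (fun i => bound_S2 h2 h1.le i)).hasSum

lemma sineS_hasDerivAt {t : ℝ} (ht : |t| < 1) : HasDerivAt sineS (sineS1 t) t := by
  obtain ⟨h1, h2, h3, h4⟩ := r_facts ht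
  set r := (1+|t|)/2 with hr
  have hrpos : (0:ℝ) < r := by linarith
  have hmem : ∀ {x : ℝ}, x ∈ Metric.ball (0:ℝ) r → |x| ≤ r := by
    intro x hx
    rw [Metric.mem_ball, Real.dist_eq, sub_zero] at hx
    exact hx.le
  exact hasDerivAt_tsum_of_isPreconnected ((summable_master h4).mul_left 11)
    Metric.isOpen_ball (convex_ball (0:ℝ) r).isPreconnected
    (fun i y _ => (hasDerivAt_pow (2*i+1) y).const_mul (sineD i))
    (fun i y hy => bound_S1 hrpos.le (hmem hy) i)
    (Metric.mem_ball_self hrpos)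
    (summable_zero.congr (fun i => by simp [zero_pow (by omega : 2*i+1 ≠ 0)]))
    (by rw [Metric.mem_ball, Real.dist_eq, sub_zero]; exact h1)

lemma sineS1_hasDerivAt {t : ℝ} (ht : |t| < 1) : HasDerivAt sineS1 (sineS2 t) t := by
  obtain ⟨h1, h2, h3, h4⟩ := r_facts ht
  set r := (1+|t|)/2 with hr
  have hrpos : (0:ℝ) < r := by linarith
  have hmem : ∀ {x : ℝ}, x ∈ Metric.ball (0:ℝ) r → |x| ≤ r := by
    intro x hx
    rw [Metric.mem_ball, Real.dist_eq, sub_zero] at hx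
    exact hx.le
  exact hasDerivAt_tsum_of_isPreconnected ((summable_master h4).mul_left 11)
    Metric.isOpen_ball (convex_ball (0:ℝ) r).isPreconnected
    (fun i y _ => ((hasDerivAt_pow (2*i) y).const_mul (((2*i+1:ℕ)):ℝ)).const_mul (sineD i))
    (fun i y hy => bound_S2 h2 (hmem hy) i)
    (Metric.mem_ball_self hrpos)
    (summable_of_ne_finset_zero (s := {0}) (fun i hi => by
      have : 2*i ≠ 0 := by simpa using hi
      simp [zero_pow this]))
    (by rw [Metric.mem_ball, Real.dist_eq, sub_zero]; exact h1)






lemma sineS_ode {t : ℝ} (ht : |t| < 1) :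
    (1 - t^2) * sineS2 t - t * sineS1 t + (16/9) * sineS t = 0 := by
  have hS := sineS_hasSum ht
  have hS1 := sineS1_hasSum ht
  have hS2 := sineS2_hasSum ht
  have hshift : HasSum (fun i : ℕ =>
      sineD (i+1) * (((2*(i+1)+1 : ℕ):ℝ) * (((2*(i+1) : ℕ):ℝ) * t ^ (2*(i+1)-1))))
      (sineS2 t) := by
    exact (hasSum_nat_add_iff
      (f := fun i : ℕ => sineD i * (((2*i+1 : ℕ):ℝ) * (((2*i : ℕ):ℝ) * t ^ (2*i-1)))) 1).mpr
      (by simpa using hS2)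
  have hfun : (fun i : ℕ =>
      sineD (i+1) * (((2*(i+1)+1 : ℕ):ℝ) * (((2*(i+1) : ℕ):ℝ) * t ^ (2*(i+1)-1)))) =
      fun i : ℕ => sineD i * ((2*(i:ℝ)+1)^2 - 16/9) * t ^ (2*i+1) := by
    funext i
    have e : 2*(i+1)-1 = 2*i+1 := by omega
    rw [e]
    push_cast
    linear_combination (t ^ (2*i+1)) * sineD_rec i
  rw [hfun] at hshift
  have htot := ((hshift.sub (hS2.mul_left (t^2))).sub (hS1.mul_left t)).add
    (hS.mul_left (16/9))
  have hzero : (fun i : ℕ =>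
      sineD i * ((2*(i:ℝ)+1)^2 - 16/9) * t ^ (2*i+1)
        - t^2 * (sineD i * (((2*i+1 : ℕ):ℝ) * (((2*i : ℕ):ℝ) * t ^ (2*i-1))))
        - t * (sineD i * (((2*i+1 : ℕ):ℝ) * t ^ (2*i)))
        + 16/9 * (sineD i * t ^ (2*i+1))) = fun _ => (0:ℝ) := by
    funext i
    rcases i with _ | j
    · push_cast; ring
    · have e : 2*(j+1)-1 = 2*j+1 := by omega
      rw [e]
      push_cast
      ring
  rw [hzero] at htot
  have := hasSum_zero.unique htot
  nlinarith [this]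

noncomputable def sineA (θ : ℝ) : ℝ :=
  sineS1 (Real.sin θ) * Real.cos θ - 4/3 * Real.cos (4/3*θ)
noncomputable def sineB (θ : ℝ) : ℝ := sineS (Real.sin θ) - Real.sin (4/3*θ)
noncomputable def sineE (θ : ℝ) : ℝ := sineA θ * sineA θ + 16/9 * (sineB θ * sineB θ)

lemma abs_sin_lt_one {θ : ℝ} (hθ : θ ∈ Set.Ioo (-(Real.pi/2)) (Real.pi/2)) :
    |Real.sin θ| < 1 := by
  obtain ⟨h1, h2⟩ := hθ
  have hpi := Real.pi_div_two_pos
  rw [abs_lt]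
  constructor
  · have := Real.strictMonoOn_sin (Set.mem_Icc.mpr ⟨le_refl _, by linarith⟩)
      (Set.mem_Icc.mpr ⟨h1.le, h2.le⟩) h1
    rwa [Real.sin_neg, Real.sin_pi_div_two] at this
  · have := Real.strictMonoOn_sin (Set.mem_Icc.mpr ⟨h1.le, h2.le⟩)
      (Set.mem_Icc.mpr ⟨by linarith, le_refl _⟩) h2
    rwa [Real.sin_pi_div_two] at this

lemma sineE_hasDerivAt {θ : ℝ} (hθ : θ ∈ Set.Ioo (-(Real.pi/2)) (Real.pi/2)) :
    HasDerivAt sineE 0 θ := by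
  have hs := abs_sin_lt_one hθ
  have hgs : HasDerivAt (fun y => sineS (Real.sin y))
      (sineS1 (Real.sin θ) * Real.cos θ) θ :=
    (sineS_hasDerivAt hs).comp θ (Real.hasDerivAt_sin θ)
  have hgs1 : HasDerivAt (fun y => sineS1 (Real.sin y))
      (sineS2 (Real.sin θ) * Real.cos θ) θ :=
    (sineS1_hasDerivAt hs).comp θ (Real.hasDerivAt_sin θ)
  have hlin : HasDerivAt (fun y : ℝ => 4/3*y) (4/3) θ := by
    simpa using (hasDerivAt_id θ).const_mul (4/3 : ℝ)
  have hsin43 : HasDerivAt (fun y => Real.sin (4/3*y)) (Real.cos (4/3*θ) * (4/3)) θ :=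
    (Real.hasDerivAt_sin _).comp θ hlin
  have hcos43 : HasDerivAt (fun y => Real.cos (4/3*y)) (-Real.sin (4/3*θ) * (4/3)) θ :=
    (Real.hasDerivAt_cos _).comp θ hlin
  have hB : HasDerivAt sineB (sineA θ) θ := by
    have := hgs.sub hsin43
    exact this.congr_deriv (by unfold sineA; ring)
  have hode := sineS_ode hs
  have hcos2 : Real.cos θ ^ 2 = 1 - Real.sin θ ^ 2 := Real.cos_sq' θ
  have hA : HasDerivAt sineA (-(16/9) * sineB θ) θ := by
    have h2 := (hgs1.mul (Real.hasDerivAt_cos θ)).sub (hcos43.const_mul (4/3 : ℝ))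
    have key : sineS2 (Real.sin θ) * Real.cos θ * Real.cos θ +
        sineS1 (Real.sin θ) * -Real.sin θ - 4/3 * (-Real.sin (4/3*θ) * (4/3)) =
        -(16/9) * sineB θ := by
      unfold sineB
      linear_combination hode + sineS2 (Real.sin θ) * hcos2
    rw [← key]
    exact h2
  have := (hA.mul hA).add ((hB.mul hB).const_mul (16/9 : ℝ))
  exact this.congr_deriv (by ring)

lemma sineS_zero : sineS 0 = 0 := by
  have h : (fun i : ℕ => sineD i * (0:ℝ) ^ (2*i+1)) = fun _ => (0:ℝ) := by
    funext i; simp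
  rw [sineS, h, tsum_zero]

lemma sineS1_zero : sineS1 0 = 4/3 := by
  rw [sineS1, tsum_eq_single 0 (fun i hi => by
    have : 2*i ≠ 0 := by omega
    simp [zero_pow this])]
  simp [sineD_zero]

lemma sineS_eq_sin {t : ℝ} (ht : |t| < 1) :
    sineS t = Real.sin (4/3 * Real.arcsin t) := by
  have hpi := Real.pi_div_two_pos
  set I : Set ℝ := Set.Ioo (-(Real.pi/2)) (Real.pi/2) with hI
  have hmem : Real.arcsin t ∈ I := by
    constructor
    · exact Real.neg_pi_div_two_lt_arcsin.mpr (by rw [abs_lt] at ht; exact ht.1)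
    · exact Real.arcsin_lt_pi_div_two.mpr (by rw [abs_lt] at ht; exact ht.2)
  have h0mem : (0:ℝ) ∈ I := ⟨by linarith, hpi⟩
  have hdiff : DifferentiableOn ℝ sineE I := fun θ hθ =>
    (sineE_hasDerivAt hθ).differentiableAt.differentiableWithinAt
  have hfd : ∀ θ ∈ I, fderivWithin ℝ sineE I θ = 0 := by
    intro θ hθ
    rw [fderivWithin_of_isOpen isOpen_Ioo hθ, (sineE_hasDerivAt hθ).hasFDerivAt.fderiv]
    ext x
    simp
  have hconst := (convex_Ioo _ _).is_const_of_fderivWithin_eq_zero hdiff hfd hmem h0mem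
  have hE0 : sineE 0 = 0 := by
    unfold sineE sineA sineB
    rw [Real.sin_zero, sineS_zero, sineS1_zero]
    simp
  rw [hE0] at hconst
  have hB0 : sineB (Real.arcsin t) = 0 := by
    unfold sineE at hconst
    nlinarith [sq_nonneg (sineA (Real.arcsin t)), sq_nonneg (sineB (Real.arcsin t)),
      hconst]
  unfold sineB at hB0
  rw [Real.sin_arcsin (by rw [abs_lt] at ht; linarith [ht.1]) (by rw [abs_lt] at ht; linarith [ht.2])] at hB0
  linarith [hB0]

/-- `Σ_{i≥0} ((6i)!/((3i)!(2i)!(2i+1)!!))·((6i+1)/(6i−1))·(t²/216)^i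
= −(3/(4t))·sin((4/3)·arcsin t)` for `|t| < 1`, with the right side extended to
`t = 0` by its limit `−1`. -/
theorem sine_identity' (t : ℝ) (ht : |t| < 1) :
    HasSum
      (fun i : ℕ =>
        ((6 * i).factorial : ℝ) /
            (((3 * i).factorial : ℝ) * ((2 * i).factorial : ℝ) * ((2 * i + 1)‼ : ℝ)) *
          ((6 * (i : ℝ) + 1) / (6 * (i : ℝ) - 1)) * (t ^ 2 / 216) ^ i)
      (if t = 0 then -1 else -(3 / (4 * t)) * Real.sin (4 / 3 * Real.arcsin t)) := by
  rcases eq_or_ne t 0 with rfl | ht0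
  · rw [if_pos rfl]
    have h := hasSum_single (f := fun i : ℕ =>
        ((6 * i).factorial : ℝ) /
            (((3 * i).factorial : ℝ) * ((2 * i).factorial : ℝ) * ((2 * i + 1)‼ : ℝ)) *
          ((6 * (i : ℝ) + 1) / (6 * (i : ℝ) - 1)) * (((0:ℝ) ^ 2 / 216) ^ i)) 0
      (fun i hi => by simp [zero_pow hi])
    convert h using 1
    norm_num [Nat.doubleFactorial]
  · rw [if_neg ht0]
    have hfe : (fun i : ℕ =>
        ((6 * i).factorial : ℝ) /
            (((3 * i).factorial : ℝ) * ((2 * i).factorial : ℝ) * ((2 * i + 1)‼ : ℝ)) *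
          ((6 * (i : ℝ) + 1) / (6 * (i : ℝ) - 1)) * (t ^ 2 / 216) ^ i) =
        fun i : ℕ => -(3/(4*t)) * (sineD i * t ^ (2*i+1)) := by
      funext i
      unfold sineD
      rw [div_pow, ← pow_mul]
      have hne1 : ((3*i).factorial : ℝ) ≠ 0 := by positivity
      have hne2 : ((2*i).factorial : ℝ) ≠ 0 := by positivity
      have hned : ((2*i+1)‼ : ℝ) ≠ 0 :=
        Nat.cast_ne_zero.mpr (Nat.doubleFactorial_pos _).ne'
      have hs1 : (6*(i:ℝ)-1) ≠ 0 := six_cast_ne i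
      have h216 : ((216:ℝ))^i ≠ 0 := by positivity
      field_simp
      ring
    rw [hfe, ← sineS_eq_sin ht]
    exact (sineS_hasSum ht).mul_left (-(3/(4*t)))
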